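/- Let u : ℝ^N → ℝ be a C² function satisfying −Δu + u ≤ 0 and u ≥ 0 on {|x| ≥ R} for some R > 0, with u bounded. Then there exists C > 0 such that u(x) ≤ C e^{−|x|} for all |x| ≥ R. -/

import Mathlib

/-- The Laplacian of a real-valued function on `EuclideanSpace ℝ (Fin N)`. -/
noncomputable def laplacian {N : ℕ} (f : EuclideanSpace ℝ (Fin N) → ℝ)
    (x : EuclideanSpace ℝ (Fin N)) : ℝ :=
  ∑ i : Fin N,
    fderiv ℝ (fun y => fderiv ℝ f y (EuclideanSpace.single i (1 : ℝ))) x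
      (EuclideanSpace.single i (1 : ℝ))

open Real Filter
variable {N : ℕ}
local notation "E" => EuclideanSpace ℝ (Fin N)

lemma hasFDerivAt_norm' (x : E) (hx : x ≠ 0) :
    HasFDerivAt (fun y : E => ‖y‖) (‖x‖⁻¹ • innerSL ℝ x) x := by
  have hx0 : ‖x‖ ≠ 0 := norm_ne_zero_iff.mpr hx
  have h1 : HasFDerivAt (fun y : E => ‖y‖ ^ 2) (2 • innerSL ℝ x) x :=
    (hasStrictFDerivAt_norm_sq x).hasFDerivAt
  have h2 := h1.sqrt (pow_ne_zero 2 hx0)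
  have heq : (fun y : E => Real.sqrt (‖y‖ ^ 2)) = fun y : E => ‖y‖ := by
    funext y; exact Real.sqrt_sq (norm_nonneg y)
  rw [heq] at h2
  refine h2.congr_fderiv ?_
  ext v
  simp only [ContinuousLinearMap.coe_smul', Pi.smul_apply, smul_eq_mul,
    Real.sqrt_sq (norm_nonneg x), ContinuousLinearMap.smul_apply, nsmul_eq_mul,
    Nat.cast_ofNat]
  field_simp

lemma hasFDerivAt_expnorm (c : ℝ) (x : E) (hx : x ≠ 0) :
    HasFDerivAt (fun y : E => Real.exp (c * ‖y‖))
      ((Real.exp (c * ‖x‖) * (c * ‖x‖⁻¹)) • innerSL ℝ x) x := by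
  have h := ((hasFDerivAt_norm' x hx).const_mul c).exp
  refine h.congr_fderiv ?_
  ext v
  simp [smul_smul, mul_assoc, mul_comm, mul_left_comm]

noncomputable def ee {N : ℕ} (i : Fin N) : EuclideanSpace ℝ (Fin N) :=
  EuclideanSpace.single i (1 : ℝ)

lemma inner_ee (y : E) (i : Fin N) : (innerSL ℝ y) (ee i) = y i := by
  have : (innerSL ℝ y) (ee i) = @inner ℝ _ _ y (EuclideanSpace.single i (1:ℝ)) := rfl
  rw [this, EuclideanSpace.inner_single_right]
  simp

lemma fderiv_expnorm_apply (c : ℝ) (y : E) (hy : y ≠ 0) (i : Fin N) :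
    fderiv ℝ (fun z : E => Real.exp (c * ‖z‖)) y (ee i)
      = Real.exp (c * ‖y‖) * (c * ‖y‖⁻¹) * y i := by
  rw [(hasFDerivAt_expnorm c y hy).fderiv, ContinuousLinearMap.smul_apply, inner_ee,
    smul_eq_mul]

lemma second_expnorm (c : ℝ) (x : E) (hx : x ≠ 0) (i : Fin N) :
    fderiv ℝ (fun y : E => fderiv ℝ (fun z : E => Real.exp (c * ‖z‖)) y (ee i)) x (ee i)
      = Real.exp (c * ‖x‖) * (c * c * (x i)^2 * ‖x‖⁻¹^2
          + c * ‖x‖⁻¹ - c * (x i)^2 * ‖x‖⁻¹^3) := by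
  have hx0 : ‖x‖ ≠ 0 := norm_ne_zero_iff.mpr hx
  have hev : (fun y : E => fderiv ℝ (fun z : E => Real.exp (c * ‖z‖)) y (ee i))
      =ᶠ[nhds x] (fun y : E => Real.exp (c * ‖y‖) * (c * ‖y‖⁻¹) * y i) := by
    filter_upwards [isOpen_compl_singleton.mem_nhds (by simpa using hx)] with y hy
    exact fderiv_expnorm_apply c y hy i
  rw [hev.fderiv_eq]
  have hA := hasFDerivAt_expnorm c x hx
  have hinv : HasFDerivAt (fun y : E => ‖y‖⁻¹)
      ((-(‖x‖ ^ 2)⁻¹) • (‖x‖⁻¹ • innerSL ℝ x)) x :=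
    (hasDerivAt_inv hx0).comp_hasFDerivAt x (hasFDerivAt_norm' x hx)
  have hB := hinv.const_mul c
  have hP : HasFDerivAt (fun y : E => y i) (EuclideanSpace.proj (𝕜 := ℝ) i) x :=
    (EuclideanSpace.proj (𝕜 := ℝ) i).hasFDerivAt
  have hG : HasFDerivAt (fun y : E => Real.exp (c * ‖y‖) * (c * ‖y‖⁻¹) * y i) _ x :=
    (hA.mul hB).mul hP
  rw [hG.fderiv]
  have hproj : (EuclideanSpace.proj (𝕜 := ℝ) i) (ee i) = 1 := by
    simp [ee]
  simp only [ContinuousLinearMap.add_apply, ContinuousLinearMap.smul_apply,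
    ContinuousLinearMap.neg_apply, inner_ee, hproj, smul_eq_mul, Pi.mul_apply]
  ring

lemma sum_sq_eq (x : E) : ∑ i : Fin N, (x i)^2 = ‖x‖^2 := by
  rw [EuclideanSpace.norm_eq, Real.sq_sqrt (by positivity)]
  simp [sq_abs]

lemma laplacian_expnorm (c : ℝ) (x : E) (hx : x ≠ 0) :
    laplacian (fun z : E => Real.exp (c * ‖z‖)) x
      = Real.exp (c * ‖x‖) * (c^2 + c * (N - 1) * ‖x‖⁻¹) := by
  have hx0 : ‖x‖ ≠ 0 := norm_ne_zero_iff.mpr hx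
  unfold laplacian
  have : ∀ i : Fin N,
      fderiv ℝ (fun y => fderiv ℝ (fun z : E => Real.exp (c * ‖z‖)) y
        (EuclideanSpace.single i (1:ℝ))) x (EuclideanSpace.single i (1:ℝ))
      = Real.exp (c * ‖x‖) * (c * c * (x i)^2 * ‖x‖⁻¹^2
          + c * ‖x‖⁻¹ - c * (x i)^2 * ‖x‖⁻¹^3) := fun i => second_expnorm c x hx i
  rw [Finset.sum_congr rfl (fun i _ => this i), ← Finset.mul_sum]
  congr 1
  have h2 : ∀ i : Fin N, c * c * (x i)^2 * ‖x‖⁻¹^2 + c * ‖x‖⁻¹ - c * (x i)^2 * ‖x‖⁻¹^3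
      = (x i)^2 * (c * c * ‖x‖⁻¹^2 - c * ‖x‖⁻¹^3) + c * ‖x‖⁻¹ := fun i => by ring
  rw [Finset.sum_congr rfl (fun i _ => h2 i), Finset.sum_add_distrib, ← Finset.sum_mul,
    sum_sq_eq, Finset.sum_const, Finset.card_univ, Fintype.card_fin, nsmul_eq_mul]
  field_simp
  ring

lemma second_deriv_nonneg_of_localmin {g g' : ℝ → ℝ} {a : ℝ}
    (hg : ∀ᶠ t in nhds (0:ℝ), HasDerivAt g (g' t) t)
    (hg' : HasDerivAt g' a 0) (h0 : g' 0 = 0)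
    (hmin : IsLocalMin g 0) : 0 ≤ a := by
  by_contra h
  push_neg at h
  have hs : Tendsto (slope g' 0) (nhdsWithin 0 {(0:ℝ)}ᶜ) (nhds a) :=
    hasDerivAt_iff_tendsto_slope.mp hg'
  have hev : ∀ᶠ t in nhdsWithin (0:ℝ) {(0:ℝ)}ᶜ, slope g' 0 t < 0 :=
    hs.eventually_lt_const h
  have hev2 : ∀ᶠ t in nhdsWithin (0:ℝ) (Set.Ioi 0), g' t < 0 := by
    have hle : nhdsWithin (0:ℝ) (Set.Ioi 0) ≤ nhdsWithin (0:ℝ) {(0:ℝ)}ᶜ :=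
      nhdsWithin_mono 0 (fun t ht => ne_of_gt ht)
    filter_upwards [hle hev, self_mem_nhdsWithin] with t ht ht'
    have h2 : t⁻¹ * g' t < 0 := by simpa [slope, h0] using ht
    have ht0 : (0:ℝ) < t := ht'
    nlinarith [inv_pos.mpr ht0]
  obtain ⟨u, hu, hsub⟩ := mem_nhdsGT_iff_exists_Ioo_subset.mp hev2
  obtain ⟨δ₂, hδ₂, hder⟩ := Metric.eventually_nhds_iff.mp hg
  obtain ⟨δ₃, hδ₃, hloc⟩ := Metric.eventually_nhds_iff.mp hmin
  set b := min (min u δ₂) δ₃ / 2 with hb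
  have hub : (0:ℝ) < u := hu
  have k1 : min (min u δ₂) δ₃ ≤ u := (min_le_left _ _).trans (min_le_left _ _)
  have k2 : min (min u δ₂) δ₃ ≤ δ₂ := (min_le_left _ _).trans (min_le_right _ _)
  have k3 : min (min u δ₂) δ₃ ≤ δ₃ := min_le_right _ _
  have hm0 : 0 < min (min u δ₂) δ₃ := lt_min (lt_min hub hδ₂) hδ₃
  have hb0 : 0 < b := by rw [hb]; linarith
  have hbu : b < u := by rw [hb]; linarith
  have hbδ₂ : b < δ₂ := by rw [hb]; linarith
  have hbδ₃ : b < δ₃ := by rw [hb]; linarith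
  have hcont : ContinuousOn g (Set.Icc 0 b) := by
    intro t ht
    have : dist t 0 < δ₂ := by
      rw [Real.dist_eq, sub_zero, abs_of_nonneg ht.1]
      exact lt_of_le_of_lt ht.2 hbδ₂
    exact (hder this).continuousAt.continuousWithinAt
  have hanti : StrictAntiOn g (Set.Icc 0 b) := by
    apply strictAntiOn_of_deriv_neg (convex_Icc 0 b) hcont
    intro t ht
    rw [interior_Icc] at ht
    have hder' : HasDerivAt g (g' t) t := by
      apply hder
      rw [Real.dist_eq, sub_zero, abs_of_pos ht.1]
      exact lt_trans ht.2 hbδ₂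
    rw [hder'.deriv]
    exact hsub ⟨ht.1, lt_trans ht.2 hbu⟩
  have h1 : g b < g 0 := hanti (Set.left_mem_Icc.mpr hb0.le) (Set.right_mem_Icc.mpr hb0.le) hb0
  have h2 : g 0 ≤ g b := by
    apply hloc
    rw [Real.dist_eq, sub_zero, abs_of_pos hb0]
    exact hbδ₃
  linarith

lemma laplacian_nonneg_of_isLocalMin {w : E → ℝ} {x : E}
    (hw : ContDiffAt ℝ 2 w x) (hmin : IsLocalMin w x) : 0 ≤ laplacian w x := by
  apply Finset.sum_nonneg
  intro i _
  set v : E := EuclideanSpace.single i (1:ℝ) with hv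
  -- line through x in direction v
  have hline : ∀ t : ℝ, HasDerivAt (fun s : ℝ => x + s • v) v t := by
    intro t
    simpa using ((hasDerivAt_id t).smul_const v).const_add x
  have hlc : Continuous (fun s : ℝ => x + s • v) := by continuity
  have hl0 : (fun s : ℝ => x + s • v) 0 = x := by simp
  -- eventual differentiability of w near x
  have hev : ∀ᶠ y in nhds x, DifferentiableAt ℝ w y :=
    (hw.eventually (by simp)).mono fun y hy => hy.differentiableAt (by norm_num)
  -- g and g'
  have hg : ∀ᶠ t in nhds (0:ℝ), HasDerivAt (fun s : ℝ => w (x + s • v))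
      (fderiv ℝ w (x + t • v) v) t := by
    have htend : Tendsto (fun t : ℝ => x + t • v) (nhds 0) (nhds x) := by
      simpa using hlc.tendsto (0:ℝ)
    filter_upwards [htend.eventually hev] with t ht
    exact ht.hasFDerivAt.comp_hasDerivAt t (hline t)
  -- Dw is differentiable at x
  have hfd : DifferentiableAt ℝ (fderiv ℝ w) x :=
    (hw.fderiv_right (m := 1) (by norm_num)).differentiableAt (by norm_num)
  have hDw : DifferentiableAt ℝ (fun y : E => fderiv ℝ w y v) x :=
    (ContinuousLinearMap.apply ℝ ℝ v).differentiableAt.comp x hfd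
  have hg' : HasDerivAt (fun t : ℝ => fderiv ℝ w (x + t • v) v)
      (fderiv ℝ (fun y : E => fderiv ℝ w y v) x v) 0 := by
    have h2 : HasFDerivAt (fun y : E => fderiv ℝ w y v)
        (fderiv ℝ (fun y : E => fderiv ℝ w y v) x) (x + (0:ℝ) • v) := by
      simpa using hDw.hasFDerivAt
    exact h2.comp_hasDerivAt 0 (hline 0)
  have h0 : fderiv ℝ w (x + (0:ℝ) • v) v = 0 := by
    rw [zero_smul, add_zero, hmin.fderiv_eq_zero]
    simp
  have hming : IsLocalMin (fun s : ℝ => w (x + s • v)) 0 := by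
    have htend : Tendsto (fun t : ℝ => x + t • v) (nhds 0) (nhds x) := by
      simpa using hlc.tendsto (0:ℝ)
    have h3 : ∀ᶠ t in nhds (0:ℝ), w (x + (0:ℝ) • v) ≤ w (x + t • v) := by
      filter_upwards [htend.eventually hmin] with t ht
      simpa using ht
    exact h3
  exact second_deriv_nonneg_of_localmin hg hg' h0 hming

lemma diffAt_fderiv_apply {f : E → ℝ} {x : E} (hf : ContDiffAt ℝ 2 f x) (v : E) :
    DifferentiableAt ℝ (fun y : E => fderiv ℝ f y v) x :=
  (ContinuousLinearMap.apply ℝ ℝ v).differentiableAt.comp x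
    ((hf.fderiv_right (m := 1) (by norm_num)).differentiableAt (by norm_num))

lemma laplacian_combo {f g h : E → ℝ} {x : E} (a b : ℝ)
    (hf : ContDiffAt ℝ 2 f x) (hg : ContDiffAt ℝ 2 g x) (hh : ContDiffAt ℝ 2 h x) :
    laplacian (fun y => a * f y + b * g y - h y) x
      = a * laplacian f x + b * laplacian g x - laplacian h x := by
  unfold laplacian
  have key : ∀ i : Fin N,
      fderiv ℝ (fun y => fderiv ℝ (fun z => a * f z + b * g z - h z) y
          (EuclideanSpace.single i (1:ℝ))) x (EuclideanSpace.single i (1:ℝ))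
        = a * fderiv ℝ (fun y => fderiv ℝ f y (EuclideanSpace.single i (1:ℝ))) x
            (EuclideanSpace.single i (1:ℝ))
          + b * fderiv ℝ (fun y => fderiv ℝ g y (EuclideanSpace.single i (1:ℝ))) x
            (EuclideanSpace.single i (1:ℝ))
          - fderiv ℝ (fun y => fderiv ℝ h y (EuclideanSpace.single i (1:ℝ))) x
            (EuclideanSpace.single i (1:ℝ)) := by
    intro i
    set v : E := EuclideanSpace.single i (1:ℝ)
    have hev : (fun y : E => fderiv ℝ (fun z => a * f z + b * g z - h z) y v)
        =ᶠ[nhds x] (fun y : E =>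
          a * fderiv ℝ f y v + b * fderiv ℝ g y v - fderiv ℝ h y v) := by
      filter_upwards [hf.eventually (by simp), hg.eventually (by simp),
        hh.eventually (by simp)] with y hfy hgy hhy
      have H := (((hfy.differentiableAt (by norm_num)).hasFDerivAt.const_mul a).add
        ((hgy.differentiableAt (by norm_num)).hasFDerivAt.const_mul b)).sub
        (hhy.differentiableAt (by norm_num)).hasFDerivAt
      have H' : HasFDerivAt (fun z => a * f z + b * g z - h z) _ y := H
      rw [H'.fderiv]
      simp
    rw [hev.fderiv_eq]
    have H2 := (((diffAt_fderiv_apply hf v).hasFDerivAt.const_mul a).add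
      ((diffAt_fderiv_apply hg v).hasFDerivAt.const_mul b)).sub
      (diffAt_fderiv_apply hh v).hasFDerivAt
    have H2' : HasFDerivAt (fun y : E =>
        a * fderiv ℝ f y v + b * fderiv ℝ g y v - fderiv ℝ h y v) _ x := H2
    rw [H2'.fderiv]
    simp
  rw [Finset.sum_congr rfl (fun i _ => key i)]
  rw [Finset.sum_sub_distrib, Finset.sum_add_distrib, ← Finset.mul_sum, ← Finset.mul_sum]

lemma contDiffAt_expnorm (c : ℝ) (x : E) (hx : x ≠ 0) :
    ContDiffAt ℝ 2 (fun y : E => Real.exp (c * ‖y‖)) x :=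
  Real.contDiff_exp.contDiffAt.comp x (contDiffAt_const.mul (contDiffAt_norm ℝ hx))

lemma continuous_expnorm (c : ℝ) : Continuous (fun y : E => Real.exp (c * ‖y‖)) :=
  Real.continuous_exp.comp (continuous_const.mul continuous_norm)

set_option maxHeartbeats 1000000 in
theorem stmt_11 (N : ℕ) (hN : 1 ≤ N) (R : ℝ) (hR : 0 < R)
    (u : EuclideanSpace ℝ (Fin N) → ℝ) (hu : ContDiff ℝ 2 u)
    (hsub : ∀ x, R ≤ ‖x‖ → -laplacian u x + u x ≤ 0)
    (hnonneg : ∀ x, R ≤ ‖x‖ → 0 ≤ u x)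
    (hbdd : ∃ M : ℝ, ∀ x, |u x| ≤ M) :
    ∃ C : ℝ, 0 < C ∧ ∀ x, R ≤ ‖x‖ → u x ≤ C * Real.exp (-‖x‖) := by
  classical
  obtain ⟨M, hM⟩ := hbdd
  have hM0 : 0 ≤ M := le_trans (abs_nonneg _) (hM 0)
  have hN1 : (1:ℝ) ≤ (N:ℝ) := by exact_mod_cast hN
  have hNR : (0:ℝ) ≤ ((N:ℝ) - 1) / R := div_nonneg (by linarith) hR.le
  set a : ℝ := 1 / (2 + ((N:ℝ) - 1) / R) with ha_def
  have hden : (0:ℝ) < 2 + ((N:ℝ) - 1) / R := by linarith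
  have ha0 : 0 < a := by rw [ha_def]; positivity
  have ha1 : a ≤ 1/2 := by
    rw [ha_def]
    rw [div_le_div_iff₀ hden (by norm_num)]
    linarith
  have hakey : a * (2 + ((N:ℝ) - 1) / R) = 1 := by
    rw [ha_def]; field_simp
    rw [mul_comm]
    exact div_self (ne_of_gt (by nlinarith))
  -- key barrier inequality for ψ at radius r ≥ R
  have hbar : ∀ r : ℝ, R ≤ r → a^2 + a * ((N:ℝ) - 1) * r⁻¹ ≤ 1 := by
    intro r hr
    have hr0 : 0 < r := lt_of_lt_of_le hR hr
    have h1 : ((N:ℝ) - 1) * r⁻¹ ≤ ((N:ℝ) - 1) * R⁻¹ := by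
      apply mul_le_mul_of_nonneg_left _ (by linarith)
      exact inv_anti₀ hR hr
    have h2 : a * (((N:ℝ) - 1) * R⁻¹) = 1 - 2 * a := by
      have : ((N:ℝ) - 1) / R = ((N:ℝ) - 1) * R⁻¹ := div_eq_mul_inv _ _
      nlinarith [hakey]
    nlinarith [sq_nonneg (1 - a), mul_le_mul_of_nonneg_left h1 ha0.le]
  set C : ℝ := (M + 1) * Real.exp R with hC_def
  have hC0 : 0 < C := by positivity
  refine ⟨C, hC0, ?_⟩
  intro x hx
  have hax : 0 < Real.exp (a * ‖x‖) := Real.exp_pos _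
  apply le_of_forall_pos_le_add
  intro η hη
  set ε : ℝ := η / Real.exp (a * ‖x‖) with hε_def
  have hε0 : 0 < ε := by positivity
  -- main comparison claim on the annulus R ≤ ‖y‖ ≤ ρ
  set φ : EuclideanSpace ℝ (Fin N) → ℝ := fun y => Real.exp ((-1) * ‖y‖) with hφ_def
  set ψ : EuclideanSpace ℝ (Fin N) → ℝ := fun y => Real.exp (a * ‖y‖) with hψ_def
  set w : EuclideanSpace ℝ (Fin N) → ℝ := fun y => C * φ y + ε * ψ y - u y with hw_def
  have hφval : ∀ y, φ y = Real.exp ((-1) * ‖y‖) := fun y => rfl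
  have hψval : ∀ y, ψ y = Real.exp (a * ‖y‖) := fun y => rfl
  have hwval : ∀ y, w y = C * φ y + ε * ψ y - u y := fun y => rfl
  set ρ : ℝ := max ‖x‖ (Real.log (M / ε) / a) with hρ_def
  have hρx : ‖x‖ ≤ ρ := le_max_left _ _
  have hρR : R ≤ ρ := le_trans hx hρx
  have hρM : M ≤ ε * Real.exp (a * ρ) := by
    have h1 : Real.log (M / ε) ≤ a * ρ := by
      rw [hρ_def]
      have := le_max_right ‖x‖ (Real.log (M / ε) / a)
      calc Real.log (M / ε) = a * (Real.log (M / ε) / a) := by field_simp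
      _ ≤ a * max ‖x‖ (Real.log (M / ε) / a) := by
            exact mul_le_mul_of_nonneg_left this ha0.le
    have h2 : M / ε ≤ Real.exp (a * ρ) := by
      calc M / ε ≤ Real.exp (Real.log (M / ε)) := Real.le_exp_log _
      _ ≤ Real.exp (a * ρ) := Real.exp_le_exp.mpr h1
    calc M = ε * (M / ε) := by field_simp
    _ ≤ ε * Real.exp (a * ρ) := mul_le_mul_of_nonneg_left h2 hε0.le
  -- the annulus
  set K : Set (EuclideanSpace ℝ (Fin N)) := {y | R ≤ ‖y‖ ∧ ‖y‖ ≤ ρ} with hK_def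
  have hKclosed : IsClosed K := by
    have : K = (fun y : EuclideanSpace ℝ (Fin N) => ‖y‖) ⁻¹' (Set.Icc R ρ) := rfl
    rw [this]
    exact isClosed_Icc.preimage continuous_norm
  have hKcompact : IsCompact K := by
    apply (isCompact_closedBall (0 : EuclideanSpace ℝ (Fin N)) ρ).of_isClosed_subset hKclosed
    intro y hy
    simpa [Metric.mem_closedBall, dist_eq_norm] using hy.2
  have hKne : K.Nonempty := by
    refine ⟨(R : ℝ) • EuclideanSpace.single ⟨0, hN⟩ (1:ℝ), ?_⟩
    have hn : ‖(R : ℝ) • EuclideanSpace.single (⟨0, hN⟩ : Fin N) (1:ℝ)‖ = R := by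
      rw [norm_smul, EuclideanSpace.norm_single]
      simp [abs_of_pos hR]
    show R ≤ ‖_‖ ∧ ‖_‖ ≤ ρ
    rw [hn]
    exact ⟨le_refl R, hρR⟩
  have hwcont : Continuous w := by
    rw [hw_def]
    exact ((continuous_const.mul (continuous_expnorm (-1))).add
      (continuous_const.mul (continuous_expnorm a))).sub hu.continuous
  obtain ⟨z, hzK, hzmin⟩ := hKcompact.exists_isMinOn hKne hwcont.continuousOn
  have hzmin' : ∀ y ∈ K, w z ≤ w y := fun y hy => hzmin hy
  -- the minimum value is nonnegative
  have hwz : 0 ≤ w z := by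
    by_contra hcon
    push_neg at hcon
    have hzR : R ≤ ‖z‖ := hzK.1
    have huz : u z ≤ M := le_trans (le_abs_self _) (hM z)
    have hφz : 0 < φ z := Real.exp_pos _
    have hψz : 0 < ψ z := Real.exp_pos _
    -- not on inner boundary
    have hzR' : R < ‖z‖ := by
      rcases lt_or_eq_of_le hzR with h | h
      · exact h
      · exfalso
        have hφR : φ z = Real.exp (-R) := by rw [hφval z, ← h]; ring_nf
        have h1 : C * φ z = (M + 1) := by
          rw [hφR, hC_def, mul_assoc, ← Real.exp_add]
          simp
        have hcomb : w z = (M + 1) + ε * ψ z - u z := by rw [hwval z, h1]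
        nlinarith
    -- not on outer boundary
    have hzρ : ‖z‖ < ρ := by
      rcases lt_or_eq_of_le hzK.2 with h | h
      · exact h
      · exfalso
        have h1 : ε * ψ z ≥ M := by rw [hψval z, h]; exact hρM
        have hcomb : w z = C * φ z + ε * ψ z - u z := hwval z
        nlinarith [mul_pos hC0 hφz]
    have hz0 : z ≠ 0 := by
      intro h
      rw [h, norm_zero] at hzR'
      linarith
    -- z is a local minimum of w
    have hmin : IsLocalMin w z := by
      have hU : IsOpen {y : EuclideanSpace ℝ (Fin N) | R < ‖y‖ ∧ ‖y‖ < ρ} := by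
        have : {y : EuclideanSpace ℝ (Fin N) | R < ‖y‖ ∧ ‖y‖ < ρ}
            = (fun y : EuclideanSpace ℝ (Fin N) => ‖y‖) ⁻¹' (Set.Ioo R ρ) := rfl
        rw [this]
        exact isOpen_Ioo.preimage continuous_norm
      have hzU : z ∈ {y : EuclideanSpace ℝ (Fin N) | R < ‖y‖ ∧ ‖y‖ < ρ} := ⟨hzR', hzρ⟩
      filter_upwards [hU.mem_nhds hzU] with y hy
      exact hzmin' y ⟨hy.1.le, hy.2.le⟩
    -- regularity of w at z
    have hφc : ContDiffAt ℝ 2 φ z := contDiffAt_expnorm (-1) z hz0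
    have hψc : ContDiffAt ℝ 2 ψ z := contDiffAt_expnorm a z hz0
    have hwc : ContDiffAt ℝ 2 w z := by
      exact ((contDiffAt_const.mul hφc).add (contDiffAt_const.mul hψc)).sub hu.contDiffAt
    have hlap : 0 ≤ laplacian w z := laplacian_nonneg_of_isLocalMin hwc hmin
    have hlapw : laplacian w z
        = C * laplacian φ z + ε * laplacian ψ z - laplacian u z := by
      exact laplacian_combo C ε hφc hψc hu.contDiffAt
    have hlapφ : laplacian φ z = φ z * ((-1:ℝ)^2 + (-1) * ((N:ℝ) - 1) * ‖z‖⁻¹) := by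
      rw [hφval z]; exact laplacian_expnorm (-1) z hz0
    have hlapψ : laplacian ψ z = ψ z * (a^2 + a * ((N:ℝ) - 1) * ‖z‖⁻¹) := by
      rw [hψval z]; exact laplacian_expnorm a z hz0
    -- supersolution property: w z - laplacian w z ≥ 0
    have hz0' : 0 < ‖z‖ := lt_trans hR hzR'
    have hzinv : 0 ≤ ‖z‖⁻¹ := inv_nonneg.mpr hz0'.le
    have hφsup : 0 ≤ φ z - laplacian φ z := by
      rw [hlapφ]
      have : φ z - φ z * ((-1:ℝ)^2 + (-1) * ((N:ℝ) - 1) * ‖z‖⁻¹)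
          = φ z * (((N:ℝ) - 1) * ‖z‖⁻¹) := by ring
      rw [this]
      exact mul_nonneg hφz.le (mul_nonneg (by linarith) hzinv)
    have hψsup : 0 ≤ ψ z - laplacian ψ z := by
      rw [hlapψ]
      have hb := hbar ‖z‖ hzR'.le
      nlinarith
    have husup : u z - laplacian u z ≤ 0 := by
      have := hsub z hzR'.le
      linarith
    have hfin : 0 ≤ w z - laplacian w z := by
      rw [hlapw, hwval z]
      nlinarith [mul_le_mul_of_nonneg_left hφsup hC0.le,
        mul_le_mul_of_nonneg_left hψsup hε0.le]
    linarith
  -- conclude at x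
  have hxK : x ∈ K := ⟨hx, hρx⟩
  have hzx := hzmin' x hxK
  have hwx : 0 ≤ w x := le_trans hwz hzx
  rw [hwval x] at hwx
  have hux : u x ≤ C * φ x + ε * ψ x := by linarith
  calc u x ≤ C * φ x + ε * ψ x := hux
  _ = C * Real.exp (-‖x‖) + η := by
      rw [hφval x, hψval x, hε_def]
      have hne : Real.exp (a * ‖x‖) ≠ 0 := (Real.exp_pos _).ne'
      field_simp
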